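/- Let A ⊂ ℝ^M be a measurable set of finite Lebesgue measure, and let (v_n) be a sequence of integrable real-valued functions on A such that v_n → 0 almost everywhere on A and v_n converges weakly in L¹(A) to some v ∈ L¹(A), i.e. ∫_A v_n g → ∫_A v g for every essentially bounded measurable g : A → ℝ. Then v = 0 almost everywhere on A and v_n → 0 strongly in L¹(A), i.e. ∫_A |v_n| → 0. -/

import Mathlib

set_option maxHeartbeats 1000000
set_option synthInstance.maxHeartbeats 1000000

open MeasureTheory Filter Topology
open scoped ENNReal


open MeasureTheory Filter Topology
open scoped ENNReal

/-- clamp to `[0,1]` -/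
noncomputable def st18cl (t : ℝ) : ℝ := max 0 (min 1 t)

lemma cl_cont : Continuous st18cl := continuous_const.max (continuous_const.min continuous_id)

lemma cl_meas : Measurable st18cl := cl_cont.measurable

lemma cl_nonneg (t : ℝ) : 0 ≤ st18cl t := le_max_left _ _

lemma cl_le_one (t : ℝ) : st18cl t ≤ 1 := max_le zero_le_one (min_le_left _ _)

lemma cl_abs_le_one (t : ℝ) : |st18cl t| ≤ 1 := by
  rw [abs_of_nonneg (cl_nonneg t)]; exact cl_le_one t

lemma cl_one : st18cl 1 = 1 := by simp [st18cl]

lemma cl_zero : st18cl 0 = 0 := by simp [st18cl]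

theorem statement18_aux {X : Type*} [MeasurableSpace X] (μ : Measure X) [IsFiniteMeasure μ]
    (v : ℕ → X → ℝ) (hmeas : ∀ n, StronglyMeasurable (v n))
    (hvint : ∀ n, Integrable (v n) μ)
    (hcauchy : ∀ g : X → ℝ, Measurable g → (∀ x, |g x| ≤ 1) →
      CauchySeq (fun n => ∫ x, v n x * g x ∂μ))
    (hae : ∀ᵐ x ∂μ, Tendsto (fun n => v n x) atTop (𝓝 0)) :
    Tendsto (fun n => ∫ x, |v n x| ∂μ) atTop (𝓝 0) := by
  haveI : Fact ((1:ℝ≥0∞) ≤ 1) := ⟨le_rfl⟩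
  set E := Lp ℝ 1 μ with hE
  let Φ : ℕ → E → ℝ := fun n f => ∫ x, v n x * st18cl (f x) ∂μ
  -- integrability of the integrands
  have hint : ∀ (n : ℕ) (h : X → ℝ), AEStronglyMeasurable h μ →
      Integrable (fun x => v n x * st18cl (h x)) μ := by
    intro n h hh
    refine Integrable.mono' (hvint n).abs
      ((hmeas n).aestronglyMeasurable.mul (cl_cont.comp_aestronglyMeasurable hh)) ?_
    filter_upwards with x
    rw [norm_mul]
    calc ‖v n x‖ * ‖st18cl (h x)‖ ≤ ‖v n x‖ * 1 :=
          mul_le_mul_of_nonneg_left (by simpa using cl_abs_le_one (h x)) (norm_nonneg _)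
      _ = |v n x| := by simp [Real.norm_eq_abs]
  -- continuity of Φ n
  have hΦc : ∀ n, Continuous (Φ n) := by
    intro n
    rw [continuous_iff_seqContinuous]
    intro fs f hfs
    refine tendsto_of_subseq_tendsto fun ns hns => ?_
    have h1 : Tendsto (fun k => fs (ns k)) atTop (𝓝 f) := hfs.comp hns
    have h2 : TendstoInMeasure μ (fun k => ((fs (ns k) : E) : X → ℝ)) atTop f :=
      tendstoInMeasure_of_tendsto_Lp h1
    obtain ⟨ms, -, hms⟩ := h2.exists_seq_tendsto_ae
    refine ⟨ms, ?_⟩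
    refine tendsto_integral_of_dominated_convergence (fun x => |v n x|)
      (fun k => ((hmeas n).aestronglyMeasurable.mul
        (cl_cont.comp_aestronglyMeasurable (Lp.aestronglyMeasurable _)))) (hvint n).abs
      (fun k => ?_) ?_
    · filter_upwards with x
      rw [norm_mul]
      calc ‖v n x‖ * ‖st18cl _‖ ≤ ‖v n x‖ * 1 :=
            mul_le_mul_of_nonneg_left (by simpa using cl_abs_le_one _) (norm_nonneg _)
        _ = |v n x| := by simp [Real.norm_eq_abs]
    · filter_upwards [hms] with x hx
      exact tendsto_const_nhds.mul ((cl_cont.tendsto _).comp hx)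
  -- Cauchy for each f
  have hΦcauchy : ∀ f : E, CauchySeq fun n => Φ n f := by
    intro f
    have h := Lp.aestronglyMeasurable (f : E)
    have heq : ∀ n, Φ n f = ∫ x, v n x * st18cl (h.mk _ x) ∂μ := by
      intro n
      refine integral_congr_ae ?_
      filter_upwards [h.ae_eq_mk] with x hx
      rw [hx]
    have : (fun n => Φ n f) = fun n => ∫ x, v n x * st18cl (h.mk _ x) ∂μ := funext heq
    rw [this]
    exact hcauchy _ (cl_meas.comp h.stronglyMeasurable_mk.measurable) fun x => cl_abs_le_one _
  -- helper: set integral of |v i| equals eLpNorm of indicator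
  have habs : ∀ (i : ℕ) (s : Set X), MeasurableSet s →
      ∫ x in s, |v i x| ∂μ = (eLpNorm (s.indicator (v i)) 1 μ).toReal := by
    intro i s hs
    have h1 : ∫ x in s, |v i x| ∂μ = ∫ x, ‖s.indicator (v i) x‖ ∂μ := by
      rw [← integral_indicator hs]
      congr 1
      ext x
      rw [norm_indicator_eq_indicator_norm]
      rfl
    rw [h1, integral_norm_eq_lintegral_enorm ((hmeas i).indicator hs).aestronglyMeasurable,
      eLpNorm_one_eq_lintegral_enorm]
  -- KEY STEP (Vitali–Hahn–Saks via Baire): uniform absolute continuity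
  have key : ∀ ε : ℝ, 0 < ε → ∃ δ : ℝ, 0 < δ ∧ ∀ n, ∀ s, MeasurableSet s →
      μ s ≤ ENNReal.ofReal δ → |∫ x in s, v n x ∂μ| ≤ ε := by
    intro ε hε
    have hε4 : (0:ℝ) < ε / 4 := by linarith
    set F : ℕ → Set E := fun N => {f | ∀ m n, N ≤ m → N ≤ n → |Φ m f - Φ n f| ≤ ε / 4}
      with hF
    have hFc : ∀ N, IsClosed (F N) := by
      intro N
      have : F N = ⋂ (m) (n) (_ : N ≤ m) (_ : N ≤ n), {f | |Φ m f - Φ n f| ≤ ε / 4} := by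
        ext f
        simp [hF, Set.mem_iInter]
      rw [this]
      exact isClosed_iInter fun m => isClosed_iInter fun n => isClosed_iInter fun _ =>
        isClosed_iInter fun _ =>
          isClosed_le (Continuous.abs ((hΦc m).sub (hΦc n))) continuous_const
    have hFu : ⋃ N, F N = Set.univ := by
      ext f
      simp only [Set.mem_iUnion, Set.mem_univ, iff_true]
      obtain ⟨N, hN⟩ := Metric.cauchySeq_iff.mp (hΦcauchy f) (ε / 4) hε4
      exact ⟨N, fun m n hm hn => le_of_lt (by rw [← Real.dist_eq]; exact hN m hm n hn)⟩
    haveI : Nonempty E := ⟨0⟩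
    obtain ⟨N, hN⟩ := nonempty_interior_of_iUnion_of_closed hFc hFu
    obtain ⟨f₀, hf₀⟩ := hN
    obtain ⟨r, hr, hball⟩ := Metric.isOpen_iff.mp isOpen_interior f₀ hf₀
    have hball' : Metric.ball f₀ r ⊆ F N := hball.trans interior_subset
    -- absolute continuity of `1 + |f₀|`
    have hbint : Integrable (fun x => 1 + ‖(f₀ : X → ℝ) x‖) μ :=
      (integrable_const 1).add (L1.integrable_coeFn f₀).norm
    obtain ⟨δ₀, hδ₀, hδ₀'⟩ := (memLp_one_iff_integrable.mpr hbint).eLpNorm_indicator_le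
      le_rfl ENNReal.one_ne_top (by linarith : (0:ℝ) < r / 2)
    -- absolute continuity of each of the first N+1 functions
    have hhead : ∀ i : ℕ, ∃ δ : ℝ, 0 < δ ∧ ∀ s : Set X, MeasurableSet s →
        μ s ≤ ENNReal.ofReal δ → eLpNorm (s.indicator (v i)) 1 μ ≤ ENNReal.ofReal (ε / 2) := by
      intro i
      obtain ⟨δ, hδ, h⟩ := (memLp_one_iff_integrable.mpr (hvint i)).eLpNorm_indicator_le
        le_rfl ENNReal.one_ne_top (by linarith : (0:ℝ) < ε / 2)
      exact ⟨δ, hδ, h⟩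
    choose δh hδh hheads using hhead
    have hrange : (Finset.range (N + 1)).Nonempty := ⟨0, by simp⟩
    set δ : ℝ := min δ₀ ((Finset.range (N + 1)).inf' hrange δh) with hδdef
    have hδpos : 0 < δ :=
      lt_min hδ₀ ((Finset.lt_inf'_iff hrange).mpr fun i _ => hδh i)
    refine ⟨δ, hδpos, ?_⟩
    -- main estimate for differences
    have hkey2 : ∀ s : Set X, MeasurableSet s → μ s ≤ ENNReal.ofReal δ →
        ∀ m n, N ≤ m → N ≤ n →
        |∫ x in s, v m x ∂μ - ∫ x in s, v n x ∂μ| ≤ ε / 2 := by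
      intro s hs hμs m n hm hn
      -- build the two perturbations of f₀
      set j₁ : X → ℝ := s.indicator fun x => 1 - (f₀ : X → ℝ) x with hj₁def
      set j₀ : X → ℝ := s.indicator fun x => 0 - (f₀ : X → ℝ) x with hj₀def
      have hj₁int : Integrable j₁ μ :=
        (((integrable_const 1).sub (L1.integrable_coeFn f₀))).indicator hs
      have hj₀int : Integrable j₀ μ :=
        (((integrable_const 0).sub (L1.integrable_coeFn f₀))).indicator hs
      have hj₁ : MemLp j₁ 1 μ := memLp_one_iff_integrable.mpr hj₁int
      have hj₀ : MemLp j₀ 1 μ := memLp_one_iff_integrable.mpr hj₀int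
      have hμs' : μ s ≤ ENNReal.ofReal δ₀ :=
        le_trans hμs (ENNReal.ofReal_le_ofReal (min_le_left _ _))
      -- norm bounds
      have hnorm : ∀ (j : X → ℝ) (hj : MemLp j 1 μ),
          (∀ x, ‖j x‖ ≤ ‖(s.indicator fun x => 1 + ‖(f₀ : X → ℝ) x‖) x‖) →
          ‖hj.toLp j‖ < r := by
        intro j hj hbound
        rw [Lp.norm_toLp]
        have h1 : eLpNorm j 1 μ ≤ eLpNorm (s.indicator fun x => 1 + ‖(f₀ : X → ℝ) x‖) 1 μ :=
          eLpNorm_mono hbound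
        have h2 : eLpNorm j 1 μ ≤ ENNReal.ofReal (r / 2) := le_trans h1 (hδ₀' s hs hμs')
        calc (eLpNorm j 1 μ).toReal ≤ (ENNReal.ofReal (r / 2)).toReal :=
              ENNReal.toReal_mono ENNReal.ofReal_ne_top h2
          _ = r / 2 := ENNReal.toReal_ofReal (by linarith)
          _ < r := by linarith
      have hb₁ : ∀ x, ‖j₁ x‖ ≤ ‖(s.indicator fun x => 1 + ‖(f₀ : X → ℝ) x‖) x‖ := by
        intro x
        rw [hj₁def]
        by_cases hx : x ∈ s
        · simp only [Set.indicator_of_mem hx]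
          rw [Real.norm_eq_abs, Real.norm_eq_abs,
            abs_of_nonneg (by positivity : (0:ℝ) ≤ 1 + ‖(f₀ : X → ℝ) x‖)]
          calc |1 - (f₀ : X → ℝ) x| ≤ |(1:ℝ)| + |(f₀ : X → ℝ) x| := abs_sub _ _
            _ = 1 + ‖(f₀ : X → ℝ) x‖ := by simp [Real.norm_eq_abs]
        · simp [Set.indicator_of_notMem hx]
      have hb₀ : ∀ x, ‖j₀ x‖ ≤ ‖(s.indicator fun x => 1 + ‖(f₀ : X → ℝ) x‖) x‖ := by
        intro x
        rw [hj₀def]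
        by_cases hx : x ∈ s
        · simp only [Set.indicator_of_mem hx]
          rw [Real.norm_eq_abs, Real.norm_eq_abs,
            abs_of_nonneg (by positivity : (0:ℝ) ≤ 1 + ‖(f₀ : X → ℝ) x‖)]
          calc |0 - (f₀ : X → ℝ) x| = |(f₀ : X → ℝ) x| := by simp
            _ ≤ 1 + ‖(f₀ : X → ℝ) x‖ := by simp only [Real.norm_eq_abs]; linarith [abs_nonneg ((f₀ : X → ℝ) x)]
        · simp [Set.indicator_of_notMem hx]
      set g₁ : E := f₀ + hj₁.toLp j₁ with hg₁def
      set g₀ : E := f₀ + hj₀.toLp j₀ with hg₀def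
      have hg₁mem : g₁ ∈ F N := by
        apply hball'
        rw [Metric.mem_ball, hg₁def, dist_eq_norm, add_sub_cancel_left]
        exact hnorm j₁ hj₁ hb₁
      have hg₀mem : g₀ ∈ F N := by
        apply hball'
        rw [Metric.mem_ball, hg₀def, dist_eq_norm, add_sub_cancel_left]
        exact hnorm j₀ hj₀ hb₀
      -- computing Φ at the perturbations
      have hcoe₁ : (g₁ : X → ℝ) =ᵐ[μ] fun x => (f₀ : X → ℝ) x + j₁ x := by
        filter_upwards [Lp.coeFn_add f₀ (hj₁.toLp j₁), hj₁.coeFn_toLp] with x hx hx'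
        rw [hg₁def, hx, Pi.add_apply, hx']
      have hcoe₀ : (g₀ : X → ℝ) =ᵐ[μ] fun x => (f₀ : X → ℝ) x + j₀ x := by
        filter_upwards [Lp.coeFn_add f₀ (hj₀.toLp j₀), hj₀.coeFn_toLp] with x hx hx'
        rw [hg₀def, hx, Pi.add_apply, hx']
      have hΦ₁ : ∀ k, Φ k g₁ = ∫ x, v k x * st18cl ((f₀ : X → ℝ) x + j₁ x) ∂μ := by
        intro k
        refine integral_congr_ae ?_
        filter_upwards [hcoe₁] with x hx
        rw [hx]
      have hΦ₀ : ∀ k, Φ k g₀ = ∫ x, v k x * st18cl ((f₀ : X → ℝ) x + j₀ x) ∂μ := by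
        intro k
        refine integral_congr_ae ?_
        filter_upwards [hcoe₀] with x hx
        rw [hx]
      have haesm₁ : AEStronglyMeasurable (fun x => (f₀ : X → ℝ) x + j₁ x) μ :=
        (Lp.aestronglyMeasurable f₀).add hj₁int.aestronglyMeasurable
      have haesm₀ : AEStronglyMeasurable (fun x => (f₀ : X → ℝ) x + j₀ x) μ :=
        (Lp.aestronglyMeasurable f₀).add hj₀int.aestronglyMeasurable
      have hdiff : ∀ k, Φ k g₁ - Φ k g₀ = ∫ x in s, v k x ∂μ := by
        intro k
        rw [hΦ₁ k, hΦ₀ k, ← integral_sub (hint k _ haesm₁) (hint k _ haesm₀),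
          ← integral_indicator hs]
        congr 1
        ext x
        by_cases hx : x ∈ s
        · rw [Set.indicator_of_mem hx]
          rw [hj₁def, hj₀def, Set.indicator_of_mem hx, Set.indicator_of_mem hx]
          have e1 : (f₀ : X → ℝ) x + (1 - (f₀ : X → ℝ) x) = 1 := by ring
          have e0 : (f₀ : X → ℝ) x + (0 - (f₀ : X → ℝ) x) = 0 := by ring
          rw [e1, e0, cl_one, cl_zero]
          ring
        · rw [Set.indicator_of_notMem hx]
          rw [hj₁def, hj₀def, Set.indicator_of_notMem hx, Set.indicator_of_notMem hx]
          ring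
      have h₁ := hg₁mem m n hm hn
      have h₀ := hg₀mem m n hm hn
      calc |∫ x in s, v m x ∂μ - ∫ x in s, v n x ∂μ|
          = |(Φ m g₁ - Φ n g₁) - (Φ m g₀ - Φ n g₀)| := by
            rw [← hdiff m, ← hdiff n]; ring_nf
        _ ≤ |Φ m g₁ - Φ n g₁| + |Φ m g₀ - Φ n g₀| := abs_sub _ _
        _ ≤ ε / 4 + ε / 4 := add_le_add h₁ h₀
        _ = ε / 2 := by ring
    -- conclude the key claim
    intro n s hs hμs
    have hheadbd : ∀ i, i ≤ N → |∫ x in s, v i x ∂μ| ≤ ε / 2 := by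
      intro i hi
      have hδle : δ ≤ δh i := le_trans (min_le_right _ _)
        (Finset.inf'_le δh (Finset.mem_range.mpr (Nat.lt_succ_of_le hi)))
      have h1 : μ s ≤ ENNReal.ofReal (δh i) :=
        le_trans hμs (ENNReal.ofReal_le_ofReal hδle)
      have h2 := hheads i s hs h1
      calc |∫ x in s, v i x ∂μ| ≤ ∫ x in s, |v i x| ∂μ := by
            simpa [Real.norm_eq_abs] using norm_integral_le_integral_norm
              (μ := μ.restrict s) (f := v i)
        _ = (eLpNorm (s.indicator (v i)) 1 μ).toReal := habs i s hs
        _ ≤ (ENNReal.ofReal (ε / 2)).toReal := ENNReal.toReal_mono ENNReal.ofReal_ne_top h2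
        _ = ε / 2 := ENNReal.toReal_ofReal (by linarith)
    by_cases hn : n ≤ N
    · linarith [hheadbd n hn, abs_nonneg (∫ x in s, v n x ∂μ)]
    · push_neg at hn
      have h1 := hkey2 s hs hμs n N (le_of_lt hn) le_rfl
      have h2 := hheadbd N le_rfl
      calc |∫ x in s, v n x ∂μ|
          ≤ |∫ x in s, v n x ∂μ - ∫ x in s, v N x ∂μ| + |∫ x in s, v N x ∂μ| := by
            have := abs_sub_abs_le_abs_sub (∫ x in s, v n x ∂μ) (∫ x in s, v N x ∂μ)
            linarith [abs_nonneg (∫ x in s, v n x ∂μ - ∫ x in s, v N x ∂μ)]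
        _ ≤ ε / 2 + ε / 2 := add_le_add h1 h2
        _ = ε := by ring
  -- uniform integrability
  have hui : UnifIntegrable v 1 μ := by
    intro ε hε
    obtain ⟨δ, hδ, h⟩ := key (ε / 4) (by linarith)
    refine ⟨δ, hδ, fun n s hs hμs => ?_⟩
    set P : Set X := {x | 0 ≤ v n x} with hP
    have hPm : MeasurableSet P := measurableSet_le measurable_const (hmeas n).measurable
    have hsplit : ∫ x in s ∩ P, |v n x| ∂μ + ∫ x in s \ P, |v n x| ∂μ
        = ∫ x in s, |v n x| ∂μ :=
      integral_inter_add_diff hPm ((hvint n).abs.integrableOn)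
    have h1 : ∫ x in s ∩ P, |v n x| ∂μ = ∫ x in s ∩ P, v n x ∂μ :=
      setIntegral_congr_fun (hs.inter hPm) fun x hx => abs_of_nonneg hx.2
    have h2 : ∫ x in s \ P, |v n x| ∂μ = - ∫ x in s \ P, v n x ∂μ := by
      rw [← integral_neg]
      exact setIntegral_congr_fun (hs.diff hPm) fun x hx =>
        abs_of_neg (lt_of_not_ge hx.2)
    have hμ1 : μ (s ∩ P) ≤ ENNReal.ofReal δ :=
      le_trans (measure_mono Set.inter_subset_left) hμs
    have hμ2 : μ (s \ P) ≤ ENNReal.ofReal δ :=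
      le_trans (measure_mono (Set.diff_subset)) hμs
    have e1 := h n (s ∩ P) (hs.inter hPm) hμ1
    have e2 := h n (s \ P) (hs.diff hPm) hμ2
    have hbound : ∫ x in s, |v n x| ∂μ ≤ ε / 2 := by
      rw [← hsplit, h1, h2]
      have := abs_le.mp e1
      have := abs_le.mp e2
      linarith [((abs_le.mp e1).2), ((abs_le.mp e2).1), ((abs_le.mp e2).2), ((abs_le.mp e1).1)]
    have hfin : eLpNorm (s.indicator (v n)) 1 μ ≠ ∞ :=
      (memLp_one_iff_integrable.mpr ((hvint n).indicator hs)).2.ne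
    rw [← ENNReal.ofReal_toReal hfin]
    apply ENNReal.ofReal_le_ofReal
    rw [← habs n s hs]
    linarith
  -- Vitali convergence theorem
  have hvit : Tendsto (fun n => eLpNorm (v n - fun _ => (0:ℝ)) 1 μ) atTop (𝓝 0) :=
    tendsto_Lp_finite_of_tendsto_ae_of_meas le_rfl ENNReal.one_ne_top hmeas
      stronglyMeasurable_const (memLp_const 0) hui (by simpa using hae)
  have hvit' : Tendsto (fun n => eLpNorm (v n) 1 μ) atTop (𝓝 0) := by
    refine hvit.congr fun n => ?_
    congr 1
    ext x
    simp
  have h2 : Tendsto (fun n => (eLpNorm (v n) 1 μ).toReal) atTop (𝓝 0) := by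
    have := (ENNReal.tendsto_toReal (by simp : (0:ℝ≥0∞) ≠ ∞)).comp hvit'
    simpa [Function.comp_def] using this
  refine h2.congr fun n => ?_
  have h3 := habs n Set.univ MeasurableSet.univ
  rw [Set.indicator_univ, Measure.restrict_univ] at h3
  exact h3.symm


/-- Corollary of the biting lemma: if integrable functions `vₙ` on a measurable
set `A ⊂ ℝ^M` of finite Lebesgue measure converge to `0` almost everywhere and
converge weakly in `L¹(A)` to some `w ∈ L¹(A)` (i.e. the integrals against every
bounded measurable test function converge), then `w = 0` a.e. on `A` and
`vₙ → 0` strongly in `L¹(A)`. -/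

theorem statement18 (M : ℕ) (A : Set (EuclideanSpace ℝ (Fin M)))
    (hA : MeasurableSet A) (hAfin : volume A < ⊤)
    (v : ℕ → EuclideanSpace ℝ (Fin M) → ℝ) (w : EuclideanSpace ℝ (Fin M) → ℝ)
    (hvint : ∀ n, IntegrableOn (v n) A)
    (hwint : IntegrableOn w A)
    (hae : ∀ᵐ x ∂(volume.restrict A),
      Tendsto (fun n => v n x) atTop (nhds 0))
    (hweak : ∀ g : EuclideanSpace ℝ (Fin M) → ℝ, Measurable g →
      (∃ Cg : ℝ, ∀ x ∈ A, |g x| ≤ Cg) →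
      Tendsto (fun n => ∫ x in A, v n x * g x) atTop
        (nhds (∫ x in A, w x * g x))) :
    (∀ᵐ x ∂(volume.restrict A), w x = 0) ∧
    Tendsto (fun n => ∫ x in A, |v n x|) atTop (nhds 0) := by
  set μ : Measure (EuclideanSpace ℝ (Fin M)) := volume.restrict A with hμ
  haveI : IsFiniteMeasure μ := ⟨by rwa [Measure.restrict_apply_univ]⟩
  -- measurable representatives
  set u : ℕ → EuclideanSpace ℝ (Fin M) → ℝ := fun n => ((hvint n).aestronglyMeasurable).mk (v n) with hu
  have huv : ∀ n, v n =ᵐ[μ] u n := fun n => ((hvint n).aestronglyMeasurable).ae_eq_mk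
  have humeas : ∀ n, StronglyMeasurable (u n) :=
    fun n => ((hvint n).aestronglyMeasurable).stronglyMeasurable_mk
  have huint : ∀ n, Integrable (u n) μ := fun n => (hvint n).congr (huv n)
  have hucauchy : ∀ g : EuclideanSpace ℝ (Fin M) → ℝ, Measurable g → (∀ x, |g x| ≤ 1) →
      CauchySeq (fun n => ∫ x, u n x * g x ∂μ) := by
    intro g hg hgb
    have h1 := hweak g hg ⟨1, fun x _ => hgb x⟩
    have h2 : ∀ n, ∫ x, u n x * g x ∂μ = ∫ x in A, v n x * g x := by
      intro n
      refine integral_congr_ae ?_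
      filter_upwards [huv n] with x hx
      rw [hx]
    rw [show (fun n => ∫ x, u n x * g x ∂μ) = fun n => ∫ x in A, v n x * g x from funext h2]
    exact h1.cauchySeq
  have huae : ∀ᵐ x ∂μ, Tendsto (fun n => u n x) atTop (𝓝 0) := by
    have hall : ∀ᵐ x ∂μ, ∀ n, v n x = u n x := ae_all_iff.mpr huv
    filter_upwards [hae, hall] with x hx hx'
    exact hx.congr fun n => hx' n
  have hmain := statement18_aux μ u humeas huint hucauchy huae
  -- strong convergence for v
  have part2 : Tendsto (fun n => ∫ x in A, |v n x|) atTop (𝓝 0) := by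
    refine hmain.congr fun n => ?_
    refine integral_congr_ae ?_
    filter_upwards [huv n] with x hx
    rw [hx]
  refine ⟨?_, part2⟩
  -- the weak limit vanishes
  have hw : ∀ s : Set (EuclideanSpace ℝ (Fin M)), MeasurableSet s → μ s < ⊤ → ∫ x in s, w x ∂μ = 0 := by
    intro s hs _
    have hg : Measurable (s.indicator fun _ => (1:ℝ)) := measurable_const.indicator hs
    have hgb : ∃ Cg : ℝ, ∀ x ∈ A, |s.indicator (fun _ => (1:ℝ)) x| ≤ Cg := by
      refine ⟨1, fun x _ => ?_⟩
      classical
      rw [Set.indicator_apply]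
      split_ifs <;> simp
    have h1 := hweak _ hg hgb
    have heq : ∀ f : EuclideanSpace ℝ (Fin M) → ℝ,
        (fun x => f x * s.indicator (fun _ => (1:ℝ)) x) = s.indicator f := by
      intro f
      classical
      ext x
      rw [Set.indicator_apply, Set.indicator_apply]
      split_ifs <;> simp
    have h2 : ∀ n, (∫ x in A, v n x * s.indicator (fun _ => (1:ℝ)) x)
        = ∫ x in s, v n x ∂μ := by
      intro n
      show (∫ x, v n x * s.indicator (fun _ => (1:ℝ)) x ∂μ) = _
      rw [heq (v n), integral_indicator hs]
    have h3 : (∫ x in A, w x * s.indicator (fun _ => (1:ℝ)) x) = ∫ x in s, w x ∂μ := by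
      show (∫ x, w x * s.indicator (fun _ => (1:ℝ)) x ∂μ) = _
      rw [heq w, integral_indicator hs]
    rw [show (fun n => ∫ x in A, v n x * s.indicator (fun _ => (1:ℝ)) x)
        = fun n => ∫ x in s, v n x ∂μ from funext h2, h3] at h1
    -- the same sequence tends to 0
    have h4 : Tendsto (fun n => ∫ x in s, v n x ∂μ) atTop (𝓝 0) := by
      refine squeeze_zero_norm (fun n => ?_) part2
      calc ‖∫ x in s, v n x ∂μ‖ ≤ ∫ x in s, ‖v n x‖ ∂μ := norm_integral_le_integral_norm _
        _ ≤ ∫ x, ‖v n x‖ ∂μ := setIntegral_le_integral (hvint n).norm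
            (by filter_upwards with x using norm_nonneg _)
        _ = ∫ x in A, |v n x| := by simp [Real.norm_eq_abs]; rfl
    exact tendsto_nhds_unique h1 h4
  have := hwint.ae_eq_zero_of_forall_setIntegral_eq_zero hw
  filter_upwards [this] with x hx
  exact hx
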